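/- (Open-chain Hamiltonian from the boundary transfer matrix.) Let d ≥ 1, L ≥ 2, and let R : ℂ → End(ℂ^d ⊗ ℂ^d) be differentiable at 0, with R(0) = P and R(λ) invertible for λ in a neighbourhood of 0. Define the monodromy matrix T(λ) = R_{0L}(λ)···R_{01}(λ) acting on ℂ^d (auxiliary space, labelled 0) tensored with (ℂ^d)^{⊗L}. Let K⁺, K⁻ : ℂ → M_d(ℂ) be differentiable at 0 with tr K⁺(λ) = 1 for all λ and K⁻(0) = I_d. Define t(λ) = tr₀[K⁺₀(λ)·T(λ)·K⁻₀(λ)·T(−λ)⁻¹] (partial trace over the auxiliary space 0), an operator on (ℂ^d)^{⊗L}. Then t(0) = Id, t is differentiable at 0, and t′(0) = 2ℋ, where ℋ = Σ_{j=1}^{L−1} H_{j,j+1} + (1/2)·(dK⁻/dλ)(0) acting at site 1 + tr₀[K⁺₀(0)·H_{L,0}], with H_{jk} = (d/dλ)(P R)_{jk}(λ)|_{λ=0} acting on the tensor factors j and k. -/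

import Mathlib

/- STATEMENT 8: Open-chain Hamiltonian from the boundary transfer matrix. -/

noncomputable section

open Complex Matrix Filter

/-- The permutation operator P on ℂ^d ⊗ ℂ^d. -/
def Pd (d : ℕ) : Matrix (Fin d × Fin d) (Fin d × Fin d) ℂ :=
  Matrix.of fun p q => if p.1 = q.2 ∧ p.2 = q.1 then 1 else 0

/-- `R_{0j}`: an operator on ℂ^d ⊗ ℂ^d acting on the auxiliary space 0 (first factor)
and the chain site j (second factor) of ℂ^d ⊗ (ℂ^d)^{⊗L}. -/
def embR0 {d L : ℕ} (j : Fin L) (M : Matrix (Fin d × Fin d) (Fin d × Fin d) ℂ) :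
    Matrix (Fin d × (Fin L → Fin d)) (Fin d × (Fin L → Fin d)) ℂ :=
  Matrix.of fun p q =>
    M (p.1, p.2 j) (q.1, q.2 j) * (if p.2 = Function.update q.2 j (p.2 j) then 1 else 0)

/-- An operator on ℂ^d ⊗ ℂ^d acting on the chain site j (first factor) and the auxiliary
space 0 (second factor). -/
def embSA {d L : ℕ} (j : Fin L) (M : Matrix (Fin d × Fin d) (Fin d × Fin d) ℂ) :
    Matrix (Fin d × (Fin L → Fin d)) (Fin d × (Fin L → Fin d)) ℂ :=
  Matrix.of fun p q =>
    M (p.2 j, p.1) (q.2 j, q.1) * (if p.2 = Function.update q.2 j (p.2 j) then 1 else 0)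

/-- A two-site operator acting on the chain sites j and k of (ℂ^d)^{⊗L}. -/
def emb2c {d L : ℕ} (j k : Fin L) (M : Matrix (Fin d × Fin d) (Fin d × Fin d) ℂ) :
    Matrix (Fin L → Fin d) (Fin L → Fin d) ℂ :=
  Matrix.of fun s s' =>
    M (s j, s k) (s' j, s' k) *
      (if s = Function.update (Function.update s' j (s j)) k (s k) then 1 else 0)

/-- A one-site operator acting on the chain site j of (ℂ^d)^{⊗L}. -/
def emb1c {d L : ℕ} (j : Fin L) (M : Matrix (Fin d) (Fin d) ℂ) :
    Matrix (Fin L → Fin d) (Fin L → Fin d) ℂ :=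
  Matrix.of fun s s' => M (s j) (s' j) * (if s = Function.update s' j (s j) then 1 else 0)

/-- A d×d matrix acting on the auxiliary space 0 of ℂ^d ⊗ (ℂ^d)^{⊗L}. -/
def embK {d L : ℕ} (K : Matrix (Fin d) (Fin d) ℂ) :
    Matrix (Fin d × (Fin L → Fin d)) (Fin d × (Fin L → Fin d)) ℂ :=
  Matrix.of fun p q => K p.1 q.1 * (if p.2 = q.2 then 1 else 0)

/-- Partial trace over the auxiliary space 0. -/
def ptr0 {d L : ℕ} (M : Matrix (Fin d × (Fin L → Fin d)) (Fin d × (Fin L → Fin d)) ℂ) :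
    Matrix (Fin L → Fin d) (Fin L → Fin d) ℂ :=
  Matrix.of fun s s' => ∑ a : Fin d, M (a, s) (a, s')

/-- The monodromy matrix `T(λ) = R_{0L}(λ)···R_{01}(λ)` on ℂ^d ⊗ (ℂ^d)^{⊗L}. -/
def Tmono (d L : ℕ) (R : ℂ → Matrix (Fin d × Fin d) (Fin d × Fin d) ℂ) (lam : ℂ) :
    Matrix (Fin d × (Fin L → Fin d)) (Fin d × (Fin L → Fin d)) ℂ :=
  ((List.ofFn fun j : Fin L => embR0 j (R lam)).reverse).prod

namespace OCH

variable {d L : ℕ}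

abbrev XX (d L : ℕ) := Fin d × (Fin L → Fin d)

lemma sum_delta {α : Type*} [Fintype α] [DecidableEq α] (x : α) (f : α → ℂ) :
    ∑ r, (if r = x then (1:ℂ) else 0) * f r = f x := by
  simp

lemma sum_delta' {α : Type*} [Fintype α] [DecidableEq α] (x : α) (f : α → ℂ) :
    ∑ r, f r * (if r = x then (1:ℂ) else 0) = f x := by
  simp

/-- permutation-style matrix, entry (p,q) = [q = φ p] -/
def Pm (φ : XX d L → XX d L) : Matrix (XX d L) (XX d L) ℂ :=
  Matrix.of fun p q => if q = φ p then 1 else 0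

/-- transposed permutation-style matrix, entry (p,q) = [p = φ q] -/
def Pm' (φ : XX d L → XX d L) : Matrix (XX d L) (XX d L) ℂ :=
  Matrix.of fun p q => if p = φ q then 1 else 0

lemma Pm_mul (φ : XX d L → XX d L) (M : Matrix (XX d L) (XX d L) ℂ) :
    Pm φ * M = Matrix.of fun p q => M (φ p) q := by
  ext p q
  simp only [Matrix.mul_apply, Pm, Matrix.of_apply]
  rw [sum_delta (φ p) (fun r => M r q)]

lemma mul_Pm' (M : Matrix (XX d L) (XX d L) ℂ) (φ : XX d L → XX d L) :
    M * Pm' φ = Matrix.of fun p q => M p (φ q) := by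
  ext p q
  simp only [Matrix.mul_apply, Pm', Matrix.of_apply]
  rw [sum_delta' (φ q) (fun r => M p r)]

lemma Pm_id : Pm (d := d) (L := L) id = 1 := by
  ext p q
  simp only [Pm, Matrix.of_apply, Matrix.one_apply, id]
  by_cases h : p = q <;> simp [h, eq_comm]

lemma Pm_mul_Pm (φ ψ : XX d L → XX d L) : Pm φ * Pm ψ = Pm (ψ ∘ φ) := by
  rw [Pm_mul]; rfl

lemma Pm_mul_Pm' (φ ψ : XX d L → XX d L) :
    Pm φ * Pm' ψ = Matrix.of fun p q => if φ p = ψ q then 1 else 0 := by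
  rw [mul_Pm']
  ext p q
  simp [Pm, eq_comm]

lemma Pm_mul_Pm'_self (φ : XX d L → XX d L) (hφ : Function.Injective φ) :
    Pm φ * Pm' φ = 1 := by
  rw [Pm_mul_Pm']
  ext p q
  simp only [Matrix.of_apply, Matrix.one_apply]
  by_cases h : p = q
  · simp [h]
  · rw [if_neg h, if_neg (fun he => h (hφ he))]

lemma Pm'_mul_Pm_self (φ : XX d L → XX d L) (hφ : Function.Bijective φ) :
    Pm' φ * Pm φ = 1 := by
  ext p q
  obtain ⟨r0, hr0⟩ := hφ.2 p
  simp only [Matrix.mul_apply, Pm, Pm', Matrix.of_apply, Matrix.one_apply]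
  rw [Finset.sum_eq_single r0]
  · rw [← hr0]
    by_cases h : q = φ r0 <;> simp [h, eq_comm]
  · intro r _ hr
    rw [if_neg (fun hh => hr (hφ.1 (hr0.trans hh)).symm), zero_mul]
  · intro h; exact absurd (Finset.mem_univ r0) h

lemma Pm_sandwich (φ ψ : XX d L → XX d L) (M : Matrix (XX d L) (XX d L) ℂ) :
    Pm φ * M * Pm' ψ = Matrix.of fun p q => M (φ p) (ψ q) := by
  rw [Pm_mul, mul_Pm']
  rfl

/-- the swap of auxiliary space with site j, as a function on indices -/
def sig (j : Fin L) (p : XX d L) : XX d L := (p.2 j, Function.update p.2 j p.1)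

lemma sig_sig (j : Fin L) (p : XX d L) : sig j (sig j p) = p := by
  simp [sig, Function.update_idem, Function.update_self, Function.update_eq_self]

def rho (m : ℕ) (p : XX d L) : XX d L :=
  (if h : 0 < m ∧ 0 < L then p.2 ⟨0, h.2⟩ else p.1,
   fun i => if h : i.1 + 1 < m ∧ i.1 + 1 < L then p.2 ⟨i.1 + 1, h.2⟩
     else if i.1 + 1 = m then p.1 else p.2 i)

def tau (m : ℕ) (p : XX d L) : XX d L :=
  (if h : m < L then p.2 ⟨m, h⟩ else p.1,
   fun i => if i.1 < m then p.2 i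
     else if h : i.1 + 1 < L then p.2 ⟨i.1 + 1, h⟩ else p.1)

lemma rho_zero (p : XX d L) : rho 0 p = p := by
  obtain ⟨a, s⟩ := p
  refine Prod.ext ?_ (funext fun i => ?_) <;> simp [rho]

lemma tau_L (p : XX d L) : tau L p = p := by
  obtain ⟨a, s⟩ := p
  refine Prod.ext ?_ (funext fun i => ?_) <;>
    simp only [tau] <;> split_ifs with h1 h2 <;> first | rfl | omega

lemma rho_succ {m : ℕ} (hm : m < L) (p : XX d L) :
    rho (m + 1) p = rho m (sig ⟨m, hm⟩ p) := by
  obtain ⟨a, s⟩ := p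
  refine Prod.ext ?_ (funext fun i => ?_) <;>
    simp only [rho, sig, Function.update_apply, Fin.ext_iff] <;>
    split_ifs <;>
    first
      | rfl
      | omega
      | (exact congrArg Fin.val (congrArg s (by simp only [Fin.mk.injEq]; omega)))

lemma rho_inj {m : ℕ} (hm : m ≤ L) : Function.Injective (rho (d := d) (L := L) m) := by
  induction m with
  | zero => intro p q h; simpa [rho_zero] using h
  | succ k ih =>
    have hk : k < L := hm
    intro p q h
    rw [rho_succ hk, rho_succ hk] at h
    have h1 := ih (le_of_lt hk) h
    have hss : sig ⟨k, hk⟩ (sig ⟨k, hk⟩ p) = sig ⟨k, hk⟩ (sig ⟨k, hk⟩ q) := congrArg _ h1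
    rwa [sig_sig, sig_sig] at hss

lemma rho_bij {m : ℕ} (hm : m ≤ L) : Function.Bijective (rho (d := d) (L := L) m) :=
  Finite.injective_iff_bijective.mp (rho_inj hm)

lemma rho_tau {m : ℕ} (hm : m ≤ L) (p : XX d L) : rho m (tau m p) = rho L p := by
  obtain ⟨a, s⟩ := p
  refine Prod.ext ?_ (funext fun i => ?_) <;>
    simp only [rho, tau, Fin.ext_iff] <;>
    split_ifs <;>
    first
      | rfl
      | omega
      | (exact congrArg Fin.val (congrArg s (by simp only [Fin.mk.injEq]; omega)))

lemma sum_update (j : Fin L) (s : Fin L → Fin d) (f : (Fin L → Fin d) → ℂ) :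
    (∑ t : Fin L → Fin d, (if t = Function.update s j (t j) then (1:ℂ) else 0) * f t)
      = ∑ c : Fin d, f (Function.update s j c) := by
  have h1 : ∀ t : Fin L → Fin d,
      (if t = Function.update s j (t j) then (1:ℂ) else 0) * f t
        = ∑ c : Fin d, ((if t = Function.update s j c then (1:ℂ) else 0)
            * (if c = t j then (1:ℂ) else 0)) * f t := by
    intro t
    rw [← Finset.sum_mul]
    congr 1
    rw [sum_delta' (t j) (fun c => if t = Function.update s j c then (1:ℂ) else 0)]
  calc (∑ t : Fin L → Fin d, (if t = Function.update s j (t j) then (1:ℂ) else 0) * f t)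
      = ∑ t : Fin L → Fin d, ∑ c : Fin d,
          ((if t = Function.update s j c then (1:ℂ) else 0)
            * (if c = t j then (1:ℂ) else 0)) * f t := by
        exact Finset.sum_congr rfl fun t _ => h1 t
    _ = ∑ c : Fin d, ∑ t : Fin L → Fin d,
          (if t = Function.update s j c then (1:ℂ) else 0)
            * ((if c = t j then (1:ℂ) else 0) * f t) := by
        rw [Finset.sum_comm]
        exact Finset.sum_congr rfl fun c _ => Finset.sum_congr rfl fun t _ => by ring
    _ = ∑ c : Fin d, f (Function.update s j c) := by
        refine Finset.sum_congr rfl fun c _ => ?_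
        rw [sum_delta (Function.update s j c)
          (fun t => (if c = t j then (1:ℂ) else 0) * f t)]
        rw [Function.update_self, if_pos rfl, one_mul]

lemma embR0_one (j : Fin L) : embR0 (d := d) (L := L) j 1 = 1 := by
  ext p q
  simp only [embR0, Matrix.of_apply, Matrix.one_apply]
  by_cases h1 : p.2 = Function.update q.2 j (p.2 j)
  · rw [if_pos h1, mul_one]
    have key : (p.1, p.2 j) = (q.1, q.2 j) ↔ p = q := by
      constructor
      · intro he
        have h2 : p.2 = q.2 := by
          funext i
          by_cases hij : i = j
          · subst hij; exact (Prod.ext_iff.mp he).2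
          · rw [h1, Function.update_apply, if_neg hij]
        exact Prod.ext (Prod.ext_iff.mp he).1 h2
      · intro he; rw [he]
    by_cases h : p = q
    · rw [if_pos (key.mpr h), if_pos h]
    · rw [if_neg (fun c => h (key.mp c)), if_neg h]
  · rw [if_neg h1, mul_zero]
    have : p ≠ q := by
      rintro rfl; exact h1 (Function.update_eq_self _ _).symm
    rw [if_neg this]

lemma embR0_mul (j : Fin L) (M N : Matrix (Fin d × Fin d) (Fin d × Fin d) ℂ) :
    embR0 (L := L) j (M * N) = embR0 j M * embR0 j N := by
  ext p q
  rw [Matrix.mul_apply]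
  rw [Fintype.sum_prod_type]
  have inner : ∀ b : Fin d,
      (∑ t : Fin L → Fin d, embR0 j M p (b, t) * embR0 j N (b, t) q)
        = ∑ c : Fin d, M (p.1, p.2 j) (b, c) * N (b, c) (q.1, q.2 j)
            * (if p.2 = Function.update q.2 j (p.2 j) then (1:ℂ) else 0) := by
    intro b
    have step : ∀ t : Fin L → Fin d,
        embR0 j M p (b, t) * embR0 j N (b, t) q
          = (if t = Function.update q.2 j (t j) then (1:ℂ) else 0) *
              (M (p.1, p.2 j) (b, t j) * N (b, t j) (q.1, q.2 j)
                * (if p.2 = Function.update t j (p.2 j) then (1:ℂ) else 0)) := by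
      intro t
      simp only [embR0, Matrix.of_apply]
      ring
    rw [Finset.sum_congr rfl fun t _ => step t]
    rw [sum_update j q.2 (fun t => M (p.1, p.2 j) (b, t j) * N (b, t j) (q.1, q.2 j)
          * (if p.2 = Function.update t j (p.2 j) then (1:ℂ) else 0))]
    refine Finset.sum_congr rfl fun c _ => ?_
    rw [Function.update_self, Function.update_idem]
  rw [Finset.sum_congr rfl fun b _ => inner b]
  simp only [embR0, Matrix.of_apply, Matrix.mul_apply, Fintype.sum_prod_type]
  rw [Finset.sum_mul]
  refine Finset.sum_congr rfl fun b _ => ?_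
  rw [Finset.sum_mul]

def pprodM (g : ℕ → Matrix (XX d L) (XX d L) ℂ) : ℕ → Matrix (XX d L) (XX d L) ℂ
  | 0 => 1
  | m + 1 => g m * pprodM g m

lemma pprodM_congr {g g' : ℕ → Matrix (XX d L) (XX d L) ℂ} (m : ℕ)
    (h : ∀ k, k < m → g k = g' k) : pprodM g m = pprodM g' m := by
  induction m with
  | zero => rfl
  | succ k ih =>
    show g k * pprodM g k = g' k * pprodM g' k
    rw [h k (by omega), ih (fun i hi => h i (by omega))]

lemma listProd_eq_pprodM (n : ℕ) (f : Fin n → Matrix (XX d L) (XX d L) ℂ) :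
    ((List.ofFn f).reverse).prod = pprodM (fun k => if h : k < n then f ⟨k, h⟩ else 1) n := by
  induction n with
  | zero => simp [pprodM]
  | succ n ih =>
    rw [List.ofFn_succ', List.concat_eq_append, List.reverse_append]
    simp only [List.reverse_singleton, List.singleton_append, List.prod_cons]
    have hstep : pprodM (fun k => if h : k < n + 1 then f ⟨k, h⟩ else 1) (n + 1)
        = f (Fin.last n) * pprodM (fun k => if h : k < n + 1 then f ⟨k, h⟩ else 1) n := by
      show (if h : n < n + 1 then f ⟨n, h⟩ else 1) * _ = _
      rw [dif_pos (by omega : n < n + 1)]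
      rfl
    have hc : pprodM (fun k => if h : k < n then f (Fin.castSucc ⟨k, h⟩) else 1) n
        = pprodM (fun k => if h : k < n + 1 then f ⟨k, h⟩ else 1) n :=
      pprodM_congr n (fun k hk => by
        have h2 : k < n + 1 := by omega
        simp only [dif_pos hk, dif_pos h2]
        rfl)
    rw [hstep, ih (fun i => f i.castSucc)]
    exact congrArg (f (Fin.last n) * ·) hc

lemma Tmono_eq_pprodM (R : ℂ → Matrix (Fin d × Fin d) (Fin d × Fin d) ℂ) (lam : ℂ) :
    Tmono d L R lam = pprodM (fun k => if h : k < L then embR0 ⟨k, h⟩ (R lam) else 1) L :=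
  listProd_eq_pprodM L _

/-- partial product of the `embR0 · (Pd d)` at `λ = 0` -/
def Qm (d L : ℕ) (m : ℕ) : Matrix (XX d L) (XX d L) ℂ :=
  pprodM (fun k => if h : k < L then embR0 ⟨k, h⟩ (Pd d) else 1) m

lemma embR0_Pd (j : Fin L) : embR0 (L := L) j (Pd d) = Pm (sig j) := by
  ext p q
  simp only [embR0, Pd, Pm, Matrix.of_apply, sig]
  by_cases h1 : p.2 = Function.update q.2 j (p.2 j)
  · rw [if_pos h1, mul_one]
    have key : (p.1 = q.2 j ∧ p.2 j = q.1) ↔ q = (p.2 j, Function.update p.2 j p.1) := by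
      constructor
      · rintro ⟨ha, hb⟩
        refine Prod.ext ?_ (funext fun i => ?_)
        · exact hb.symm
        · show q.2 i = Function.update p.2 j p.1 i
          by_cases hij : i = j
          · subst hij; rw [Function.update_self]; exact ha.symm
          · rw [Function.update_apply, if_neg hij]
            have hci := congrFun h1 i
            rw [Function.update_apply, if_neg hij] at hci
            exact hci.symm
      · intro he
        constructor
        · rw [he]; exact (Function.update_self j p.1 p.2).symm
        · rw [he]
    by_cases h : q = (p.2 j, Function.update p.2 j p.1)
    · rw [if_pos (key.mpr h)]; exact (if_pos h).symm
    · rw [if_neg (fun c => h (key.mp c))]; exact (if_neg h).symm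
  · rw [if_neg h1, mul_zero]
    have : q ≠ (p.2 j, Function.update p.2 j p.1) := by
      rintro rfl
      apply h1
      funext i
      by_cases hij : i = j
      · subst hij; simp
      · simp [Function.update_apply, if_neg hij]
    exact (if_neg this).symm

lemma Qm_eq_Pm {m : ℕ} (hm : m ≤ L) : Qm d L m = Pm (rho m) := by
  induction m with
  | zero =>
    have : rho (d := d) (L := L) 0 = id := funext rho_zero
    rw [this, Pm_id]; rfl
  | succ k ih =>
    have hk : k < L := hm
    show (if h : k < L then embR0 ⟨k, h⟩ (Pd d) else 1) * Qm d L k = _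
    rw [dif_pos hk, ih (le_of_lt hk), embR0_Pd, Pm_mul_Pm,
      show rho (d := d) (L := L) (k + 1) = rho k ∘ sig ⟨k, hk⟩ from
        funext fun p => rho_succ hk p]

def Qinv (d L : ℕ) (m : ℕ) : Matrix (XX d L) (XX d L) ℂ := Pm' (rho m)

lemma Qm_mul_Qinv {m : ℕ} (hm : m ≤ L) : Qm d L m * Qinv d L m = 1 := by
  rw [Qm_eq_Pm hm, Qinv, Pm_mul_Pm'_self _ (rho_inj hm)]

lemma Qinv_mul_Qm {m : ℕ} (hm : m ≤ L) : Qinv d L m * Qm d L m = 1 := by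
  rw [Qm_eq_Pm hm, Qinv, Pm'_mul_Pm_self _ (rho_bij hm)]

lemma QL_mul_Qinv {j : ℕ} (hj : j ≤ L) : Qm d L L * Qinv d L j = Pm (tau j) := by
  rw [Qm_eq_Pm (le_refl L), Qinv, Pm_mul_Pm']
  ext p q
  simp only [Matrix.of_apply, Pm]
  have key : rho L p = rho j q ↔ q = tau j p := by
    constructor
    · intro h
      exact (rho_inj hj ((rho_tau hj p).trans h)).symm
    · rintro rfl
      exact (rho_tau hj p).symm
  by_cases h : q = tau j p
  · rw [if_pos (key.mpr h), if_pos h]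
  · rw [if_neg (fun c => h (key.mp c)), if_neg h]

lemma Qj_mul_QinvL {j : ℕ} (hj : j ≤ L) : Qm d L j * Qinv d L L = Pm' (tau j) := by
  rw [Qm_eq_Pm hj, Qinv, Pm_mul_Pm']
  ext p q
  simp only [Matrix.of_apply, Pm']
  have key : rho j p = rho L q ↔ p = tau j q := by
    constructor
    · intro h
      exact rho_inj hj (h.trans (rho_tau hj q).symm)
    · rintro rfl
      exact rho_tau hj q
  by_cases h : p = tau j q
  · rw [if_pos (key.mpr h), if_pos h]
  · rw [if_neg (fun c => h (key.mp c)), if_neg h]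

/-! ### entrywise derivatives of matrix-valued functions -/

def MHasDeriv (f : ℂ → Matrix (XX d L) (XX d L) ℂ) (f' : Matrix (XX d L) (XX d L) ℂ) : Prop :=
  ∀ p q, HasDerivAt (fun lam => f lam p q) (f' p q) 0

lemma MHasDeriv.const (A : Matrix (XX d L) (XX d L) ℂ) : MHasDeriv (fun _ => A) 0 := by
  intro p q
  simpa using hasDerivAt_const (0:ℂ) (A p q)

lemma MHasDeriv.mul {f g : ℂ → Matrix (XX d L) (XX d L) ℂ}
    {f' g' : Matrix (XX d L) (XX d L) ℂ} (hf : MHasDeriv f f') (hg : MHasDeriv g g') :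
    MHasDeriv (fun lam => f lam * g lam) (f' * g 0 + f 0 * g') := by
  intro p q
  have h : HasDerivAt (fun lam => ∑ k : XX d L, f lam p k * g lam k q)
      (∑ k : XX d L, (f' p k * g 0 k q + f 0 p k * g' k q)) 0 :=
    HasDerivAt.fun_sum (fun k _ => (hf p k).mul (hg k q))
  have e2 : (f' * g 0 + f 0 * g') p q = ∑ k : XX d L, (f' p k * g 0 k q + f 0 p k * g' k q) := by
    simp [Matrix.add_apply, Matrix.mul_apply, Finset.sum_add_distrib]
  rw [e2]
  exact h.congr_of_eventuallyEq (Filter.Eventually.of_forall fun lam => Matrix.mul_apply)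

lemma MHasDeriv.comp_neg {f : ℂ → Matrix (XX d L) (XX d L) ℂ}
    {f' : Matrix (XX d L) (XX d L) ℂ} (hf : MHasDeriv f f') :
    MHasDeriv (fun lam => f (-lam)) (-f') := by
  intro p q
  have h1 : HasDerivAt (fun lam : ℂ => -lam) (-1 : ℂ) 0 := hasDerivAt_neg 0
  have h2 : HasDerivAt (fun lam => f lam p q) (f' p q) (-(0:ℂ)) := by
    rw [neg_zero]; exact hf p q
  have := HasDerivAt.comp (0:ℂ) h2 h1
  simpa [Matrix.neg_apply, mul_comm, Function.comp_def] using this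

lemma MHasDeriv.differentiableAt {f : ℂ → Matrix (XX d L) (XX d L) ℂ}
    {f' : Matrix (XX d L) (XX d L) ℂ} (hf : MHasDeriv f f') (p q : XX d L) :
    DifferentiableAt ℂ (fun lam => f lam p q) 0 := (hf p q).differentiableAt

lemma mhd_embR0 (j : Fin L) {R : ℂ → Matrix (Fin d × Fin d) (Fin d × Fin d) ℂ}
    {Rd : Matrix (Fin d × Fin d) (Fin d × Fin d) ℂ}
    (h : ∀ p q, HasDerivAt (fun lam => R lam p q) (Rd p q) 0) :
    MHasDeriv (fun lam => embR0 (L := L) j (R lam)) (embR0 j Rd) := by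
  intro p q
  exact (h (p.1, p.2 j) (q.1, q.2 j)).mul_const _

lemma mhd_embK {K : ℂ → Matrix (Fin d) (Fin d) ℂ} {K' : Matrix (Fin d) (Fin d) ℂ}
    (h : ∀ a b, HasDerivAt (fun lam => K lam a b) (K' a b) 0) :
    MHasDeriv (L := L) (fun lam => embK (K lam)) (embK K') := by
  intro p q
  exact (h p.1 q.1).mul_const _

/-! ### determinant and adjugate differentiability -/

lemma diffAt_det {f : ℂ → Matrix (XX d L) (XX d L) ℂ}
    (hf : ∀ p q, DifferentiableAt ℂ (fun lam => f lam p q) 0) :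
    DifferentiableAt ℂ (fun lam => (f lam).det) 0 := by
  have e : (fun lam => (f lam).det) = fun lam => ∑ σ : Equiv.Perm (XX d L),
      ((Equiv.Perm.sign σ : ℤ) : ℂ) * ∏ i, f lam (σ i) i := by
    funext lam
    rw [Matrix.det_apply]
    refine Finset.sum_congr rfl fun σ _ => ?_
    rw [Units.smul_def, zsmul_eq_mul]
  rw [e]
  apply DifferentiableAt.fun_sum
  intro σ _
  exact (DifferentiableAt.fun_finsetProd (fun i _ => hf (σ i) i)).const_mul _

lemma diffAt_adj {f : ℂ → Matrix (XX d L) (XX d L) ℂ}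
    (hf : ∀ p q, DifferentiableAt ℂ (fun lam => f lam p q) 0) (p q : XX d L) :
    DifferentiableAt ℂ (fun lam => (f lam).adjugate p q) 0 := by
  have e : (fun lam => (f lam).adjugate p q)
      = fun lam => ((f lam).updateRow q (Pi.single p 1)).det :=
    funext fun lam => Matrix.adjugate_apply _ _ _
  rw [e]
  apply diffAt_det
  intro r t
  have e2 : (fun lam => ((f lam).updateRow q (Pi.single p 1)) r t)
      = fun lam => if r = q then (Pi.single p 1 : XX d L → ℂ) t else f lam r t :=
    funext fun lam => Matrix.updateRow_apply
  rw [e2]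
  by_cases h : r = q
  · simp only [if_pos h]; exact differentiableAt_const _
  · simp only [if_neg h]; exact hf r t

lemma diffAt_inv_entries {f : ℂ → Matrix (XX d L) (XX d L) ℂ}
    (hf : ∀ p q, DifferentiableAt ℂ (fun lam => f lam p q) 0)
    (hdet : (f 0).det ≠ 0) (p q : XX d L) :
    DifferentiableAt ℂ (fun lam => (f lam)⁻¹ p q) 0 := by
  have e : (fun lam => (f lam)⁻¹ p q)
      = fun lam => ((f lam).det)⁻¹ * (f lam).adjugate p q := by
    funext lam
    rw [Matrix.inv_def, Matrix.smul_apply, Ring.inverse_eq_inv, smul_eq_mul]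
  rw [e]
  exact ((diffAt_det hf).inv hdet).mul (diffAt_adj hf p q)

/-! ### ptr0 basics -/

lemma ptr0_add (A B : Matrix (XX d L) (XX d L) ℂ) : ptr0 (A + B) = ptr0 A + ptr0 B := by
  ext s s'
  simp [ptr0, Finset.sum_add_distrib]

lemma ptr0_sum {ι : Type*} (t : Finset ι) (F : ι → Matrix (XX d L) (XX d L) ℂ) :
    ptr0 (∑ j ∈ t, F j) = ∑ j ∈ t, ptr0 (F j) := by
  ext s s'
  simp only [ptr0, Matrix.of_apply, Matrix.sum_apply]
  rw [Finset.sum_comm]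

lemma embK_one : embK (1 : Matrix (Fin d) (Fin d) ℂ) = (1 : Matrix (XX d L) (XX d L) ℂ) := by
  ext p q
  simp only [embK, Matrix.of_apply, Matrix.one_apply, Prod.ext_iff]
  by_cases h1 : p.1 = q.1 <;> by_cases h2 : p.2 = q.2 <;>
    simp [h1, h2]

lemma ptr0_embK (K : Matrix (Fin d) (Fin d) ℂ) :
    ptr0 (embK (L := L) K) = (Matrix.trace K) • (1 : Matrix (Fin L → Fin d) (Fin L → Fin d) ℂ) := by
  ext s s'
  simp only [ptr0, embK, Matrix.of_apply, Matrix.smul_apply, Matrix.one_apply, Matrix.trace,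
    Matrix.diag, smul_eq_mul]
  rw [Finset.sum_mul]

lemma ptr0_embK_mul (K : Matrix (Fin d) (Fin d) ℂ) (M : Matrix (XX d L) (XX d L) ℂ) :
    ptr0 (embK K * M)
      = Matrix.of fun s s' => ∑ a : Fin d, ∑ b : Fin d, K a b * M (b, s) (a, s') := by
  ext s s'
  simp only [ptr0, Matrix.of_apply]
  refine Finset.sum_congr rfl fun a _ => ?_
  rw [Matrix.mul_apply, Fintype.sum_prod_type]
  refine Finset.sum_congr rfl fun b _ => ?_
  have step : ∀ t, embK K (a, s) (b, t) * M (b, t) (a, s')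
      = (if t = s then (1:ℂ) else 0) * (K a b * M (b, t) (a, s')) := by
    intro t
    simp only [embK, Matrix.of_apply]
    by_cases h : s = t
    · subst h; simp
    · rw [if_neg h, if_neg (fun c => h c.symm)]; ring
  rw [Finset.sum_congr rfl fun t _ => step t, sum_delta s (fun t => K a b * M (b, t) (a, s'))]

lemma Pd_mul_apply (M : Matrix (Fin d × Fin d) (Fin d × Fin d) ℂ) (p q : Fin d × Fin d) :
    (Pd d * M) p q = M (p.2, p.1) q := by
  rw [Matrix.mul_apply]
  have step : ∀ r, Pd d p r = if r = (p.2, p.1) then (1:ℂ) else 0 := by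
    intro r
    simp only [Pd, Matrix.of_apply]
    by_cases h : r = (p.2, p.1)
    · rw [if_pos h, if_pos (by rw [h]; exact ⟨rfl, rfl⟩)]
    · rw [if_neg h, if_neg (fun c => h (Prod.ext c.2.symm c.1.symm))]
  rw [Finset.sum_congr rfl fun r _ => by rw [step r]]
  exact sum_delta (p.2, p.1) (fun r => M r q)

/-! ### component lemmas for tau and rho -/

lemma tau_fst {m : ℕ} (hm : m < L) (p : XX d L) : (tau m p).1 = p.2 ⟨m, hm⟩ := dif_pos hm

lemma tau_snd_lt {m : ℕ} (p : XX d L) (i : Fin L) (h : i.1 < m) : (tau m p).2 i = p.2 i :=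
  if_pos h

lemma tau_snd_mid {m : ℕ} (p : XX d L) (i : Fin L) (h1 : ¬ i.1 < m) (h2 : i.1 + 1 < L) :
    (tau m p).2 i = p.2 ⟨i.1 + 1, h2⟩ := by
  show (if i.1 < m then p.2 i else if h : i.1 + 1 < L then p.2 ⟨i.1 + 1, h⟩ else p.1) = _
  rw [if_neg h1, dif_pos h2]

lemma tau_snd_last {m : ℕ} (p : XX d L) (i : Fin L) (h1 : ¬ i.1 < m) (h2 : ¬ i.1 + 1 < L) :
    (tau m p).2 i = p.1 := by
  show (if i.1 < m then p.2 i else if h : i.1 + 1 < L then p.2 ⟨i.1 + 1, h⟩ else p.1) = _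
  rw [if_neg h1, dif_neg h2]

lemma rhoL_fst (hL : 0 < L) (p : XX d L) : (rho L p).1 = p.2 ⟨0, hL⟩ := dif_pos ⟨hL, hL⟩

lemma rhoL_snd_lt (p : XX d L) (i : Fin L) (h : i.1 + 1 < L) :
    (rho L p).2 i = p.2 ⟨i.1 + 1, h⟩ := dif_pos ⟨h, h⟩

lemma rhoL_snd_last (p : XX d L) (i : Fin L) (h : i.1 + 1 = L) : (rho L p).2 i = p.1 := by
  show (if hh : i.1 + 1 < L ∧ i.1 + 1 < L then p.2 ⟨i.1 + 1, hh.2⟩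
    else if i.1 + 1 = L then p.1 else p.2 i) = _
  rw [dif_neg (by omega), if_pos h]

/-- the core delta-identity: `[q = (1 ∧ cond)]` splitting -/
lemma ite_and_split (P Q : Prop) [Decidable P] [Decidable Q] :
    (if P ∧ Q then (1:ℂ) else 0) = (if P then (1:ℂ) else 0) * (if Q then (1:ℂ) else 0) := by
  by_cases hP : P <;> by_cases hQ : Q <;> simp [hP, hQ]

/-! ### evaluation of the bulk terms -/

set_option maxHeartbeats 3000000 in
lemma eval_mid {j : ℕ} (hj : j + 1 < L) (H : Matrix (Fin d × Fin d) (Fin d × Fin d) ℂ)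
    (K : Matrix (Fin d) (Fin d) ℂ) (htr : Matrix.trace K = 1) :
    ptr0 (embK K * (Pm (tau (j+1)) *
        embR0 (⟨j, by omega⟩ : Fin L) (Matrix.of fun p q => H (p.2, p.1) q) * Pm' (tau j)))
      = emb2c ⟨j, by omega⟩ ⟨j+1, hj⟩ H := by
  have hL : 0 < L := by omega
  set jF : Fin L := ⟨j, by omega⟩ with hjF
  set j1F : Fin L := ⟨j+1, hj⟩ with hj1F
  set Rd : Matrix (Fin d × Fin d) (Fin d × Fin d) ℂ := Matrix.of fun p q => H (p.2, p.1) q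
    with hRd
  rw [Pm_sandwich, ptr0_embK_mul]
  ext s s'
  simp only [Matrix.of_apply]
  have key : ∀ a b : Fin d,
      embR0 jF Rd (tau (j+1) (b, s)) (tau j (a, s'))
        = (if b = a then (1:ℂ) else 0) * emb2c jF j1F H s s' := by
    intro a b
    -- components of tau (j+1) (b,s) and tau j (a,s')
    have c1 : (tau (j+1) (b, s)).1 = s j1F := tau_fst hj _
    have c2 : (tau (j+1) (b, s)).2 jF = s jF := tau_snd_lt _ _ (show j < j + 1 by omega)
    have c3 : (tau j (a, s')).1 = s' jF := tau_fst (show j < L by omega) _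
    have c4 : (tau j (a, s')).2 jF = s' j1F := by
      rw [tau_snd_mid _ _ (show ¬ j < j from by omega) (show j + 1 < L from hj)]
    show Rd ((tau (j+1) (b, s)).1, (tau (j+1) (b, s)).2 jF)
        ((tau j (a, s')).1, (tau j (a, s')).2 jF)
        * (if (tau (j+1) (b, s)).2
            = Function.update (tau j (a, s')).2 jF ((tau (j+1) (b, s)).2 jF) then (1:ℂ) else 0)
      = _
    rw [c1, c2, c3, c4]
    have hval : Rd (s j1F, s jF) (s' jF, s' j1F) = H (s jF, s j1F) (s' jF, s' j1F) := rfl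
    rw [hval]
    -- now the delta equivalence
    have hiff : ((tau (j+1) (b, s)).2 = Function.update (tau j (a, s')).2 jF (s jF))
        ↔ (b = a ∧ s = Function.update (Function.update s' jF (s jF)) j1F (s j1F)) := by
      constructor
      · intro h
        have hba : b = a := by
          have h1 := congrFun h ⟨L-1, by omega⟩
          rw [Function.update_apply] at h1
          rw [if_neg (show ¬ (⟨L-1, by omega⟩ : Fin L) = jF from fun hc => by
            have := congrArg Fin.val hc; simp only [hjF] at this; omega)] at h1
          rw [tau_snd_last (b, s) ⟨L-1, by omega⟩ (show ¬ L - 1 < j + 1 by omega)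
              (show ¬ L - 1 + 1 < L by omega),
            tau_snd_last (a, s') ⟨L-1, by omega⟩ (show ¬ L - 1 < j by omega)
              (show ¬ L - 1 + 1 < L by omega)] at h1
          exact h1
        refine ⟨hba, funext fun i => ?_⟩
        rw [Function.update_apply, Function.update_apply]
        by_cases hi1 : i = j1F
        · rw [if_pos hi1, hi1]
        · rw [if_neg hi1]
          by_cases hi2 : i = jF
          · rw [if_pos hi2, hi2]
          · rw [if_neg hi2]
            have hv1 : i.1 ≠ j + 1 := fun hv => hi1 (Fin.ext hv)
            have hv2 : i.1 ≠ j := fun hv => hi2 (Fin.ext hv)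
            by_cases hlt : i.1 < j
            · have hh := congrFun h i
              rw [tau_snd_lt (b, s) i (show i.1 < j + 1 by omega), Function.update_apply,
                if_neg hi2, tau_snd_lt (a, s') i hlt] at hh
              exact hh
            · have hge : j + 2 ≤ i.1 := by omega
              have him : i.1 - 1 < L := by omega
              have hh := congrFun h (⟨i.1 - 1, him⟩ : Fin L)
              rw [tau_snd_mid (b, s) (⟨i.1 - 1, him⟩ : Fin L) (show ¬ i.1 - 1 < j + 1 by omega)
                  (show i.1 - 1 + 1 < L by omega), Function.update_apply,
                if_neg (show ¬ (⟨i.1 - 1, him⟩ : Fin L) = jF from fun hc => by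
                  have := congrArg Fin.val hc; simp only [hjF] at this; omega),
                tau_snd_mid (a, s') (⟨i.1 - 1, him⟩ : Fin L) (show ¬ i.1 - 1 < j by omega)
                  (show i.1 - 1 + 1 < L by omega)] at hh
              have hii : i = (⟨i.1 - 1 + 1, show i.1 - 1 + 1 < L by omega⟩ : Fin L) :=
                Fin.ext (show i.1 = i.1 - 1 + 1 by omega)
              rw [hii]
              exact hh
      · rintro ⟨hba, hss⟩
        funext i
        rw [Function.update_apply]
        by_cases hi : i = jF
        · rw [if_pos hi, hi]
          exact tau_snd_lt (b, s) jF (show j < j + 1 by omega)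
        · rw [if_neg hi]
          have hv2 : i.1 ≠ j := fun hv => hi (Fin.ext hv)
          by_cases h1 : i.1 < j
          · rw [tau_snd_lt (b, s) i (show i.1 < j + 1 by omega), tau_snd_lt (a, s') i h1]
            have hh := congrFun hss i
            rw [Function.update_apply, if_neg (show ¬ i = j1F from fun hc => by
                have := congrArg Fin.val hc; simp only [hj1F] at this; omega),
              Function.update_apply, if_neg hi] at hh
            exact hh
          · by_cases h2 : i.1 + 1 < L
            · rw [tau_snd_mid (b, s) i (show ¬ i.1 < j + 1 by omega) h2,
                tau_snd_mid (a, s') i (show ¬ i.1 < j by omega) h2]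
              have hh := congrFun hss (⟨i.1 + 1, h2⟩ : Fin L)
              rw [Function.update_apply, if_neg (show ¬ (⟨i.1+1, h2⟩ : Fin L) = j1F from
                  fun hc => by have := congrArg Fin.val hc; simp only [hj1F] at this; omega),
                Function.update_apply, if_neg (show ¬ (⟨i.1+1, h2⟩ : Fin L) = jF from
                  fun hc => by have := congrArg Fin.val hc; simp only [hjF] at this; omega)] at hh
              exact hh
            · rw [tau_snd_last (b, s) i (show ¬ i.1 < j + 1 by omega) h2,
                tau_snd_last (a, s') i (show ¬ i.1 < j by omega) h2]
              exact hba
    rw [if_congr hiff rfl rfl, ite_and_split]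
    show _ = (if b = a then (1:ℂ) else 0)
      * (H (s jF, s j1F) (s' jF, s' j1F) * (if s = Function.update
          (Function.update s' jF (s jF)) j1F (s j1F) then (1:ℂ) else 0))
    ring
  rw [Finset.sum_congr rfl fun a (_ : a ∈ Finset.univ) =>
    Finset.sum_congr rfl fun b (_ : b ∈ Finset.univ) => by rw [key a b]]
  have collapse : ∀ a : Fin d,
      (∑ b : Fin d, K a b * ((if b = a then (1:ℂ) else 0) * emb2c jF j1F H s s'))
        = K a a * emb2c jF j1F H s s' := by
    intro a
    rw [Finset.sum_congr rfl fun b (_ : b ∈ Finset.univ) => show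
      K a b * ((if b = a then (1:ℂ) else 0) * emb2c jF j1F H s s')
        = (if b = a then (1:ℂ) else 0) * (K a b * emb2c jF j1F H s s') by ring]
    rw [sum_delta a (fun b => K a b * emb2c jF j1F H s s')]
  rw [Finset.sum_congr rfl fun a (_ : a ∈ Finset.univ) => collapse a, ← Finset.sum_mul]
  have : ∑ a : Fin d, K a a = 1 := htr
  rw [this, one_mul]

lemma collapse_sum (K : Matrix (Fin d) (Fin d) ℂ) (htr : Matrix.trace K = 1) (G : ℂ) :
    (∑ a : Fin d, ∑ b : Fin d, K a b * ((if b = a then (1:ℂ) else 0) * G)) = G := by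
  have inner : ∀ a : Fin d,
      (∑ b : Fin d, K a b * ((if b = a then (1:ℂ) else 0) * G)) = K a a * G := by
    intro a
    rw [Finset.sum_congr rfl fun b (_ : b ∈ Finset.univ) => show
      K a b * ((if b = a then (1:ℂ) else 0) * G)
        = (if b = a then (1:ℂ) else 0) * (K a b * G) by ring]
    rw [sum_delta a (fun b => K a b * G)]
  rw [Finset.sum_congr rfl fun a (_ : a ∈ Finset.univ) => inner a, ← Finset.sum_mul]
  have h1 : ∑ a : Fin d, K a a = 1 := htr
  rw [h1, one_mul]

set_option maxHeartbeats 1000000 in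
lemma eval_last (hL : 0 < L) (H : Matrix (Fin d × Fin d) (Fin d × Fin d) ℂ) :
    Pm (tau L) * embR0 (⟨L-1, by omega⟩ : Fin L) (Matrix.of fun p q => H (p.2, p.1) q)
        * Pm' (tau (L-1))
      = embSA ⟨L-1, by omega⟩ H := by
  set lF : Fin L := ⟨L-1, by omega⟩ with hlF
  rw [Pm_sandwich]
  ext p q
  simp only [Matrix.of_apply, tau_L]
  have c3 : (tau (L-1) q).1 = q.2 lF := tau_fst (by omega) q
  have c4 : (tau (L-1) q).2 lF = q.1 :=
    tau_snd_last q lF (show ¬ L - 1 < L - 1 by omega) (show ¬ L - 1 + 1 < L by omega)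
  have c5 : Function.update (tau (L-1) q).2 lF (p.2 lF) = Function.update q.2 lF (p.2 lF) := by
    funext i
    rw [Function.update_apply, Function.update_apply]
    by_cases hi : i = lF
    · rw [if_pos hi, if_pos hi]
    · rw [if_neg hi, if_neg hi]
      have hv : i.1 ≠ L - 1 := fun hv => hi (Fin.ext hv)
      exact tau_snd_lt q i (show i.1 < L - 1 by have := i.2; omega)
  show (Matrix.of fun p q => H (p.2, p.1) q) (p.1, p.2 lF) ((tau (L-1) q).1, (tau (L-1) q).2 lF)
      * (if p.2 = Function.update (tau (L-1) q).2 lF (p.2 lF) then (1:ℂ) else 0)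
    = embSA lF H p q
  rw [c3, c4, c5]
  rfl

set_option maxHeartbeats 1000000 in
lemma eval_B (hL : 0 < L) (K Kd : Matrix (Fin d) (Fin d) ℂ) (htr : Matrix.trace K = 1) :
    ptr0 (embK K * (Pm (rho L) * embK Kd * Pm' (rho L))) = emb1c ⟨0, hL⟩ Kd := by
  set zF : Fin L := ⟨0, hL⟩ with hzF
  rw [Pm_sandwich, ptr0_embK_mul]
  ext s s'
  simp only [Matrix.of_apply]
  have key : ∀ a b : Fin d,
      embK Kd (rho L (b, s)) (rho L (a, s'))
        = (if b = a then (1:ℂ) else 0) * emb1c zF Kd s s' := by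
    intro a b
    have c1 : (rho L (b, s)).1 = s zF := rhoL_fst hL _
    have c2 : (rho L (a, s')).1 = s' zF := rhoL_fst hL _
    show Kd (rho L (b, s)).1 (rho L (a, s')).1
        * (if (rho L (b, s)).2 = (rho L (a, s')).2 then (1:ℂ) else 0)
      = _
    rw [c1, c2]
    have hiff : ((rho L (b, s)).2 = (rho L (a, s')).2)
        ↔ (b = a ∧ s = Function.update s' zF (s zF)) := by
      constructor
      · intro h
        have hba : b = a := by
          have h1 := congrFun h ⟨L-1, by omega⟩
          rw [rhoL_snd_last (b, s) ⟨L-1, by omega⟩ (show L - 1 + 1 = L by omega),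
            rhoL_snd_last (a, s') ⟨L-1, by omega⟩ (show L - 1 + 1 = L by omega)] at h1
          exact h1
        refine ⟨hba, funext fun i => ?_⟩
        rw [Function.update_apply]
        by_cases hi : i = zF
        · rw [if_pos hi, hi]
        · rw [if_neg hi]
          have hv : i.1 ≠ 0 := fun hv => hi (Fin.ext hv)
          have him : i.1 - 1 < L := by have := i.2; omega
          have h2 := congrFun h (⟨i.1 - 1, him⟩ : Fin L)
          rw [rhoL_snd_lt (b, s) (⟨i.1 - 1, him⟩ : Fin L)
              (show i.1 - 1 + 1 < L by have := i.2; omega),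
            rhoL_snd_lt (a, s') (⟨i.1 - 1, him⟩ : Fin L)
              (show i.1 - 1 + 1 < L by have := i.2; omega)] at h2
          have hii : i = (⟨i.1 - 1 + 1, show i.1 - 1 + 1 < L by have := i.2; omega⟩ : Fin L) :=
            Fin.ext (show i.1 = i.1 - 1 + 1 by omega)
          rw [hii]
          exact h2
      · rintro ⟨hba, hss⟩
        funext i
        by_cases h2 : i.1 + 1 < L
        · rw [rhoL_snd_lt (b, s) i h2, rhoL_snd_lt (a, s') i h2]
          have hh := congrFun hss (⟨i.1 + 1, h2⟩ : Fin L)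
          rw [Function.update_apply, if_neg (show ¬ (⟨i.1 + 1, h2⟩ : Fin L) = zF from
              fun hc => by have := congrArg Fin.val hc; simp only [hzF] at this; omega)] at hh
          exact hh
        · have h3 : i.1 + 1 = L := by have := i.2; omega
          rw [rhoL_snd_last (b, s) i h3, rhoL_snd_last (a, s') i h3]
          exact hba
    rw [if_congr hiff rfl rfl, ite_and_split]
    show _ = (if b = a then (1:ℂ) else 0)
      * (Kd (s zF) (s' zF) * (if s = Function.update s' zF (s zF) then (1:ℂ) else 0))
    ring
  rw [Finset.sum_congr rfl fun a (_ : a ∈ Finset.univ) =>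
    Finset.sum_congr rfl fun b (_ : b ∈ Finset.univ) => by rw [key a b]]
  exact collapse_sum K htr _

lemma MHasDeriv.congr {f : ℂ → Matrix (XX d L) (XX d L) ℂ} {A B : Matrix (XX d L) (XX d L) ℂ}
    (h : MHasDeriv f A) (e : A = B) : MHasDeriv f B := e ▸ h

def DDj (d L : ℕ) (Rd : Matrix (Fin d × Fin d) (Fin d × Fin d) ℂ) (m j : ℕ) :
    Matrix (XX d L) (XX d L) ℂ :=
  Qm d L m * Qinv d L (j+1) * (if h : j < L then embR0 ⟨j, h⟩ Rd else 0) * Qm d L j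

lemma Qm_succ {m : ℕ} (hm : m < L) :
    Qm d L (m+1) = embR0 ⟨m, hm⟩ (Pd d) * Qm d L m := by
  show (if h : m < L then embR0 ⟨m, h⟩ (Pd d) else 1) * Qm d L m = _
  rw [dif_pos hm]

lemma mhd_pprod (R : ℂ → Matrix (Fin d × Fin d) (Fin d × Fin d) ℂ) (hR0 : R 0 = Pd d)
    (Rd : Matrix (Fin d × Fin d) (Fin d × Fin d) ℂ)
    (hRd : ∀ p q, HasDerivAt (fun lam => R lam p q) (Rd p q) 0) :
    ∀ m, m ≤ L →
      MHasDeriv (fun lam => pprodM (fun k => if h : k < L then embR0 ⟨k, h⟩ (R lam) else 1) m)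
        (∑ j ∈ Finset.range m, DDj d L Rd m j) := by
  intro m
  induction m with
  | zero =>
    intro _
    rw [Finset.range_zero, Finset.sum_empty]
    exact MHasDeriv.const 1
  | succ m ih =>
    intro hm1
    have hm : m < L := hm1
    have hf : MHasDeriv (fun lam => if h : m < L then embR0 (⟨m, hm⟩ : Fin L) (R lam) else 1)
        (embR0 ⟨m, hm⟩ Rd) := by
      intro p q
      have h2 := mhd_embR0 (⟨m, hm⟩ : Fin L) hRd p q
      simp only [dif_pos hm]
      exact h2
    have hg := ih (le_of_lt hm)
    have hmul := hf.mul hg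
    have hQ0 : pprodM (fun k => if h : k < L then embR0 ⟨k, h⟩ (R 0) else 1) m = Qm d L m := by
      simp only [hR0]
      rfl
    have hfinal : embR0 (⟨m, hm⟩ : Fin L) Rd
          * pprodM (fun k => if h : k < L then embR0 ⟨k, h⟩ (R 0) else 1) m
        + (if h : m < L then embR0 (⟨m, hm⟩ : Fin L) (R 0) else 1)
          * (∑ j ∈ Finset.range m, DDj d L Rd m j)
        = ∑ j ∈ Finset.range (m+1), DDj d L Rd (m+1) j := by
      rw [hQ0, dif_pos hm, hR0, Finset.sum_range_succ]
      have hterm : DDj d L Rd (m+1) m = embR0 (⟨m, hm⟩ : Fin L) Rd * Qm d L m := by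
        show Qm d L (m+1) * Qinv d L (m+1) * _ * Qm d L m = _
        rw [Qm_mul_Qinv (show m + 1 ≤ L from hm1), one_mul, dif_pos hm]
      have hsum : embR0 (⟨m, hm⟩ : Fin L) (Pd d) * (∑ j ∈ Finset.range m, DDj d L Rd m j)
          = ∑ j ∈ Finset.range m, DDj d L Rd (m+1) j := by
        rw [Finset.mul_sum]
        refine Finset.sum_congr rfl fun j hj => ?_
        show embR0 (⟨m, hm⟩ : Fin L) (Pd d) * (Qm d L m * Qinv d L (j+1) * _ * Qm d L j)
          = Qm d L (m+1) * Qinv d L (j+1) * _ * Qm d L j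
        rw [Qm_succ hm]
        simp only [mul_assoc]
      rw [hterm, hsum]
      rw [add_comm]
    exact hmul.congr hfinal

lemma isUnit_embR0 (j : Fin L) {M : Matrix (Fin d × Fin d) (Fin d × Fin d) ℂ}
    (h : IsUnit M) : IsUnit (embR0 (L := L) j M) := by
  obtain ⟨u, hu⟩ := h
  refine ⟨⟨embR0 j M, embR0 j (↑u⁻¹), ?_, ?_⟩, rfl⟩
  · rw [← embR0_mul, ← hu, Units.mul_inv, embR0_one]
  · rw [← embR0_mul, ← hu, Units.inv_mul, embR0_one]

lemma isUnit_Tmono (R : ℂ → Matrix (Fin d × Fin d) (Fin d × Fin d) ℂ) (mu : ℂ)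
    (h : IsUnit (R mu)) : IsUnit (Tmono d L R mu) := by
  rw [Tmono_eq_pprodM]
  have key : ∀ m, IsUnit (pprodM (fun k => if hk : k < L then embR0 ⟨k, hk⟩ (R mu) else 1) m) := by
    intro m
    induction m with
    | zero => exact isUnit_one
    | succ m ih =>
      show IsUnit ((if hk : m < L then embR0 ⟨m, hk⟩ (R mu) else 1) * _)
      refine IsUnit.mul ?_ ih
      by_cases hk : m < L
      · rw [dif_pos hk]; exact isUnit_embR0 _ h
      · rw [dif_neg hk]; exact isUnit_one
  exact key L

end OCH

/-- The boundary transfer matrix `t(λ) = tr₀[K⁺₀(λ)T(λ)K⁻₀(λ)T(−λ)⁻¹]` satisfies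
`t(0) = Id` and `t′(0) = 2ℋ` with
`ℋ = Σ_{j=1}^{L−1} H_{j,j+1} + (1/2)(dK⁻/dλ)(0)|₁ + tr₀[K⁺₀(0)H_{L,0}]`,
where `H_{jk} = d/dλ (PR)_{jk}(λ)|_{λ=0}`. -/
theorem open_chain_hamiltonian (d L : ℕ) (hd : 1 ≤ d) (hL : 2 ≤ L)
    (R : ℂ → Matrix (Fin d × Fin d) (Fin d × Fin d) ℂ)
    (hR0 : R 0 = Pd d)
    (hRdiff : ∀ p q, DifferentiableAt ℂ (fun lam => R lam p q) 0)
    (hRinv : ∀ᶠ lam in nhds (0 : ℂ), IsUnit (R lam))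
    (Kp Km : ℂ → Matrix (Fin d) (Fin d) ℂ)
    (hKpdiff : ∀ a b, DifferentiableAt ℂ (fun lam => Kp lam a b) 0)
    (htrKp : ∀ lam : ℂ, Matrix.trace (Kp lam) = 1)
    (hKm0 : Km 0 = 1)
    -- `H = d/dλ (P R(λ))|_{λ=0}`
    (H : Matrix (Fin d × Fin d) (Fin d × Fin d) ℂ)
    (hH : ∀ p q, HasDerivAt (fun lam => (Pd d * R lam) p q) (H p q) 0)
    -- `Kd = dK⁻/dλ(0)`
    (Kd : Matrix (Fin d) (Fin d) ℂ)
    (hKd : ∀ a b, HasDerivAt (fun lam => Km lam a b) (Kd a b) 0)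
    (ham : Matrix (Fin L → Fin d) (Fin L → Fin d) ℂ)
    (hham : ham =
      (∑ j : Fin (L - 1),
        emb2c ⟨j.val, by have := j.2; omega⟩ ⟨j.val + 1, by have := j.2; omega⟩ H) +
      (2 : ℂ)⁻¹ • emb1c ⟨0, by omega⟩ Kd +
      ptr0 (embK (Kp 0) * embSA ⟨L - 1, by omega⟩ H)) :
    ptr0 (embK (Kp 0) * Tmono d L R 0 * embK (Km 0) * (Tmono d L R 0)⁻¹) = 1 ∧
    ∀ s s' : Fin L → Fin d,
      HasDerivAt
        (fun lam =>
          ptr0 (embK (Kp lam) * Tmono d L R lam * embK (Km lam) *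
            (Tmono d L R (-lam))⁻¹) s s')
        (2 * ham s s') 0 := by
  classical
  have hL0 : 0 < L := by omega
  have hT0 : Tmono d L R 0 = OCH.Qm d L L := by
    rw [OCH.Tmono_eq_pprodM]
    simp only [hR0]
    rfl
  have hQQ : OCH.Qm d L L * OCH.Qinv d L L = 1 := OCH.Qm_mul_Qinv (le_refl L)
  have hQQ' : OCH.Qinv d L L * OCH.Qm d L L = 1 := OCH.Qinv_mul_Qm (le_refl L)
  have hTinv : (Tmono d L R 0)⁻¹ = OCH.Qinv d L L := by
    rw [hT0]
    exact Matrix.inv_eq_right_inv hQQ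
  constructor
  · rw [hKm0, OCH.embK_one, mul_one, hTinv, hT0, mul_assoc, hQQ, mul_one, OCH.ptr0_embK,
      htrKp 0, one_smul]
  -- the derivative part
  set Rd : Matrix (Fin d × Fin d) (Fin d × Fin d) ℂ := Matrix.of fun p q => H (p.2, p.1) q
    with hRdDef
  have hRd : ∀ p q, HasDerivAt (fun lam => R lam p q) (Rd p q) 0 := by
    intro p q
    have h := hH (p.2, p.1) q
    have e : (fun lam => R lam p q) = (fun lam => (Pd d * R lam) (p.2, p.1) q) := by
      funext lam
      rw [OCH.Pd_mul_apply]
    rw [e]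
    exact h
  have hmT : OCH.MHasDeriv (fun lam => Tmono d L R lam)
      (∑ j ∈ Finset.range L, OCH.DDj d L Rd L j) := by
    have e : (fun lam => Tmono d L R lam)
        = fun lam => OCH.pprodM (fun k => if h : k < L then embR0 ⟨k, h⟩ (R lam) else 1) L :=
      funext fun lam => OCH.Tmono_eq_pprodM R lam
    rw [e]
    exact OCH.mhd_pprod R hR0 Rd hRd L (le_refl L)
  set TD := ∑ j ∈ Finset.range L, OCH.DDj d L Rd L j with hTDdef
  have hmTn : OCH.MHasDeriv (fun lam => Tmono d L R (-lam)) (-TD) := hmT.comp_neg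
  have hdet0 : (Tmono d L R (-(0:ℂ))).det ≠ 0 := by
    rw [neg_zero, hT0]
    have hu : IsUnit (OCH.Qm d L L) := ⟨⟨_, OCH.Qinv d L L, hQQ, hQQ'⟩, rfl⟩
    exact ((Matrix.isUnit_iff_isUnit_det _).mp hu).ne_zero
  have hg4diff : ∀ p q : OCH.XX d L,
      DifferentiableAt ℂ (fun lam => (Tmono d L R (-lam))⁻¹ p q) 0 :=
    OCH.diffAt_inv_entries (fun p q => (hmTn p q).differentiableAt) hdet0
  set G' : Matrix (OCH.XX d L) (OCH.XX d L) ℂ :=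
    Matrix.of fun p q => deriv (fun lam => (Tmono d L R (-lam))⁻¹ p q) 0 with hG'def
  have hmG : OCH.MHasDeriv (fun lam => (Tmono d L R (-lam))⁻¹) G' :=
    fun p q => (hg4diff p q).hasDerivAt
  have hevent : ∀ᶠ lam in nhds (0:ℂ), Tmono d L R (-lam) * (Tmono d L R (-lam))⁻¹ = 1 := by
    have hneg : Filter.Tendsto (fun lam : ℂ => -lam) (nhds (0:ℂ)) (nhds (0:ℂ)) := by
      simpa using continuous_neg.tendsto (0:ℂ)
    exact (hneg.eventually hRinv).mono fun lam hl =>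
      Matrix.mul_nonsing_inv _ ((Matrix.isUnit_iff_isUnit_det _).mp (OCH.isUnit_Tmono R _ hl))
  have hprod := hmTn.mul hmG
  have hzero : (-TD) * (Tmono d L R (-(0:ℂ)))⁻¹ + Tmono d L R (-(0:ℂ)) * G' = 0 := by
    ext p q
    have h1 := hprod p q
    have h2 : HasDerivAt (fun lam => (Tmono d L R (-lam) * (Tmono d L R (-lam))⁻¹) p q)
        (0:ℂ) 0 :=
      (hasDerivAt_const (0:ℂ)
        ((1 : Matrix (OCH.XX d L) (OCH.XX d L) ℂ) p q)).congr_of_eventuallyEq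
        (hevent.mono fun lam hl => by
          show (Tmono d L R (-lam) * (Tmono d L R (-lam))⁻¹) p q
            = (1 : Matrix (OCH.XX d L) (OCH.XX d L) ℂ) p q
          rw [hl])
    have h3 := h1.unique h2
    simp only [Matrix.zero_apply]
    exact h3
  rw [neg_zero, hTinv, hT0] at hzero
  have h5 : OCH.Qm d L L * G' = TD * OCH.Qinv d L L := by
    have h6 := eq_neg_of_add_eq_zero_right hzero
    rw [neg_mul, neg_neg] at h6
    exact h6
  have hGval : G' = OCH.Qinv d L L * TD * OCH.Qinv d L L := by
    calc G' = 1 * G' := (one_mul _).symm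
      _ = (OCH.Qinv d L L * OCH.Qm d L L) * G' := by rw [hQQ']
      _ = OCH.Qinv d L L * (OCH.Qm d L L * G') := by rw [mul_assoc]
      _ = OCH.Qinv d L L * (TD * OCH.Qinv d L L) := by rw [h5]
      _ = OCH.Qinv d L L * TD * OCH.Qinv d L L := by rw [mul_assoc]
  set Kp' : Matrix (Fin d) (Fin d) ℂ := Matrix.of fun a b => deriv (fun lam => Kp lam a b) 0
    with hKp'def
  have hKp' : ∀ a b, HasDerivAt (fun lam => Kp lam a b) (Kp' a b) 0 :=
    fun a b => (hKpdiff a b).hasDerivAt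
  have htrKp' : Matrix.trace Kp' = 0 := by
    have h1 : HasDerivAt (fun lam => ∑ a : Fin d, Kp lam a a) (∑ a : Fin d, Kp' a a) 0 :=
      HasDerivAt.fun_sum fun a _ => hKp' a a
    have h2 : HasDerivAt (fun lam => ∑ a : Fin d, Kp lam a a) 0 0 := by
      have e : (fun lam => ∑ a : Fin d, Kp lam a a) = fun _ => (1:ℂ) :=
        funext fun lam => htrKp lam
      rw [e]
      exact hasDerivAt_const 0 1
    exact h1.unique h2
  have hmKp : OCH.MHasDeriv (L := L) (fun lam => embK (Kp lam)) (embK Kp') := OCH.mhd_embK hKp'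
  have hmKm : OCH.MHasDeriv (L := L) (fun lam => embK (Km lam)) (embK Kd) := OCH.mhd_embK hKd
  have hfull0 := ((hmKp.mul hmT).mul hmKm).mul hmG
  set V' : Matrix (OCH.XX d L) (OCH.XX d L) ℂ :=
    embK Kp' + embK (Kp 0) * (TD * OCH.Qinv d L L)
      + embK (Kp 0) * (OCH.Qm d L L * (embK Kd * OCH.Qinv d L L))
      + embK (Kp 0) * (TD * OCH.Qinv d L L) with hV'def
  have hVeq : ((embK Kp' * Tmono d L R 0 + embK (Kp 0) * TD) * embK (Km 0)
        + embK (Kp 0) * Tmono d L R 0 * embK Kd) * (Tmono d L R (-(0:ℂ)))⁻¹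
      + embK (Kp 0) * Tmono d L R 0 * embK (Km 0) * G' = V' := by
    rw [hKm0, OCH.embK_one, neg_zero, hTinv, hT0, hGval]
    simp only [mul_one]
    rw [add_mul, add_mul]
    have ha : embK Kp' * OCH.Qm d L L * OCH.Qinv d L L = embK Kp' := by
      rw [mul_assoc, hQQ, mul_one]
    have hb : embK (Kp 0) * TD * OCH.Qinv d L L = embK (Kp 0) * (TD * OCH.Qinv d L L) := by
      rw [mul_assoc]
    have hc : embK (Kp 0) * OCH.Qm d L L * embK Kd * OCH.Qinv d L L
        = embK (Kp 0) * (OCH.Qm d L L * (embK Kd * OCH.Qinv d L L)) := by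
      simp only [mul_assoc]
    have hqq2 : OCH.Qm d L L * (OCH.Qinv d L L * TD * OCH.Qinv d L L)
        = TD * OCH.Qinv d L L := by
      rw [← mul_assoc, ← mul_assoc, hQQ, one_mul]
    have hd : embK (Kp 0) * OCH.Qm d L L * (OCH.Qinv d L L * TD * OCH.Qinv d L L)
        = embK (Kp 0) * (TD * OCH.Qinv d L L) := by
      rw [mul_assoc, hqq2]
    rw [ha, hb, hc, hd, hV'def]
  have hfull := hfull0.congr hVeq
  -- evaluate ptr0 V'
  have hTDQ : TD * OCH.Qinv d L L
      = ∑ j ∈ Finset.range L, (OCH.Pm (OCH.tau (j+1))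
          * ((if h : j < L then embR0 ⟨j, h⟩ Rd else 0) * OCH.Pm' (OCH.tau j))) := by
    rw [hTDdef, Finset.sum_mul]
    refine Finset.sum_congr rfl fun j hj => ?_
    have hjL : j < L := Finset.mem_range.mp hj
    show OCH.Qm d L L * OCH.Qinv d L (j+1) * (if h : j < L then embR0 ⟨j, h⟩ Rd else 0)
        * OCH.Qm d L j * OCH.Qinv d L L = _
    simp only [mul_assoc]
    rw [OCH.Qj_mul_QinvL (le_of_lt hjL), ← mul_assoc (OCH.Qm d L L) (OCH.Qinv d L (j+1)),
      OCH.QL_mul_Qinv (show j + 1 ≤ L from hjL)]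
  have hEval : ptr0 (embK (Kp 0) * (TD * OCH.Qinv d L L))
      = (∑ j ∈ Finset.range (L-1),
          (if h : j + 1 < L then emb2c (⟨j, by omega⟩ : Fin L) ⟨j+1, h⟩ H else 0))
        + ptr0 (embK (Kp 0) * embSA (⟨L-1, by omega⟩ : Fin L) H) := by
    rw [hTDQ, Finset.mul_sum, OCH.ptr0_sum]
    have hrange : Finset.range L = Finset.range ((L-1)+1) := by
      congr 1
      omega
    rw [hrange, Finset.sum_range_succ]
    congr 1
    · refine Finset.sum_congr rfl fun j hj => ?_
      have hj1 : j + 1 < L := by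
        have := Finset.mem_range.mp hj
        omega
      rw [dif_pos (show j < L by omega), dif_pos hj1,
        ← mul_assoc (OCH.Pm (OCH.tau (j+1))), hRdDef]
      exact OCH.eval_mid hj1 H (Kp 0) (htrKp 0)
    · rw [dif_pos (show L - 1 < L by omega), show L - 1 + 1 = L from by omega,
        ← mul_assoc (OCH.Pm (OCH.tau L)), hRdDef, OCH.eval_last hL0 H]
  have hBval : ptr0 (embK (Kp 0) * (OCH.Qm d L L * (embK Kd * OCH.Qinv d L L)))
      = emb1c (⟨0, hL0⟩ : Fin L) Kd := by
    have e : OCH.Qm d L L * (embK Kd * OCH.Qinv d L L)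
        = OCH.Pm (OCH.rho L) * embK Kd * OCH.Pm' (OCH.rho L) := by
      rw [OCH.Qm_eq_Pm (le_refl L), show OCH.Qinv d L L = OCH.Pm' (OCH.rho L) from rfl,
        ← mul_assoc]
    rw [e]
    exact OCH.eval_B hL0 (Kp 0) Kd (htrKp 0)
  have hS : (∑ j ∈ Finset.range (L-1),
        (if h : j + 1 < L then emb2c (⟨j, by omega⟩ : Fin L) ⟨j+1, h⟩ H else 0))
      = ∑ j : Fin (L - 1),
          emb2c (⟨j.val, by have := j.2; omega⟩ : Fin L) ⟨j.val + 1, by have := j.2; omega⟩ H := by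
    rw [← Fin.sum_univ_eq_sum_range]
    refine Finset.sum_congr rfl fun j _ => ?_
    rw [dif_pos (show j.val + 1 < L by have := j.2; omega)]
  have hps : ptr0 V' = (2:ℂ) • ham := by
    rw [hV'def, OCH.ptr0_add, OCH.ptr0_add, OCH.ptr0_add, OCH.ptr0_embK, htrKp', zero_smul,
      hEval, hBval, hham, hS]
    have h2i : (2:ℂ) • ((2:ℂ)⁻¹ • emb1c (⟨0, by omega⟩ : Fin L) Kd)
        = emb1c (⟨0, by omega⟩ : Fin L) Kd := by
      rw [smul_smul]
      norm_num
    rw [smul_add, smul_add, h2i]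
    rw [two_smul, two_smul]
    abel
  intro s s'
  have hDer : HasDerivAt (fun lam : ℂ => ∑ a : Fin d,
      ((embK (Kp lam) * Tmono d L R lam * embK (Km lam)
        * (Tmono d L R (-lam))⁻¹ :
          Matrix (Fin d × (Fin L → Fin d)) (Fin d × (Fin L → Fin d)) ℂ)) (a, s) (a, s'))
      (∑ a : Fin d, V' (a, s) (a, s')) 0 :=
    HasDerivAt.fun_sum fun a _ => hfull (a, s) (a, s')
  have hv : (∑ a : Fin d, V' (a, s) (a, s')) = 2 * ham s s' := by
    calc (∑ a : Fin d, V' (a, s) (a, s')) = ptr0 V' s s' := rfl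
      _ = ((2:ℂ) • ham) s s' := by rw [hps]
      _ = 2 * ham s s' := by rw [Matrix.smul_apply, smul_eq_mul]
  exact hv ▸ hDer


end
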